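/- Let A₁, …, A_m be Hermitian n×n matrices forming a frame for ℂ^{n×r} (n ≥ r). Then the frame is generalized phase retrievable — i.e. the map x x* ↦ (⟨x x*, A_j⟩_ℝ)_{j=1}^m is injective on {x x* : x ∈ ℂ^{n×r}} — if and only if for every U₁ ∈ ℂ^{n×r} with orthonormal columns (U₁* U₁ = I_r), the real span of {A_j U₁ : j = 1,…,m} equals the orthogonal complement in (ℂ^{n×r}, ⟨·,·⟩_ℝ) of the space {U₁ K : K ∈ ℂ^{r×r}, K* = −K}. -/

import Mathlib

open Matrix Filter
open scoped ComplexOrder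

noncomputable def frob {p q : ℕ} (x : Matrix (Fin p) (Fin q) ℂ) : ℝ :=
  Real.sqrt (Matrix.trace (xᴴ * x)).re

noncomputable def rinner {p q : ℕ} (X Y : Matrix (Fin p) (Fin q) ℂ) : ℝ :=
  (Matrix.trace (Xᴴ * Y)).re

/-- The square root of a positive semi-definite matrix, as defined in Mathlib (Dec 2024);
removed from Mathlib since. -/
noncomputable def Matrix.PosSemidef.sqrt {n 𝕜 : Type*} [Fintype n] [RCLike 𝕜] [DecidableEq n]
    {A : Matrix n n 𝕜} (hA : A.PosSemidef) : Matrix n n 𝕜 :=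
  hA.1.eigenvectorUnitary.1 * diagonal ((↑) ∘ (√·) ∘ hA.1.eigenvalues) *
    (star hA.1.eigenvectorUnitary : Matrix n n 𝕜)

noncomputable def nuclear {p q : ℕ} (x : Matrix (Fin p) (Fin q) ℂ) : ℝ :=
  (Matrix.trace (Matrix.posSemidef_conjTranspose_mul_self x).sqrt).re

noncomputable def theta {n r : ℕ} (x : Matrix (Fin n) (Fin r) ℂ) : Matrix (Fin n) (Fin n) ℂ :=
  (Matrix.posSemidef_self_mul_conjTranspose x).sqrt

noncomputable def psi {n r : ℕ} (x : Matrix (Fin n) (Fin r) ℂ) : Matrix (Fin n) (Fin n) ℂ :=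
  frob x • theta x

noncomputable def Dmet {n r : ℕ} (x y : Matrix (Fin n) (Fin r) ℂ) : ℝ :=
  ⨅ U : Matrix.unitaryGroup (Fin r) ℂ, frob (x - y * (U : Matrix (Fin r) (Fin r) ℂ))

noncomputable def dmet {n r : ℕ} (x y : Matrix (Fin n) (Fin r) ℂ) : ℝ :=
  ⨅ U : Matrix.unitaryGroup (Fin r) ℂ,
    frob (x - y * (U : Matrix (Fin r) (Fin r) ℂ)) * frob (x + y * (U : Matrix (Fin r) (Fin r) ℂ))


variable {p q : ℕ}

lemma rinner_comm (X Y : Matrix (Fin p) (Fin q) ℂ) : rinner X Y = rinner Y X := by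
  unfold rinner
  have : Yᴴ * X = (Xᴴ * Y)ᴴ := by simp [Matrix.conjTranspose_mul]
  rw [this, Matrix.trace_conjTranspose]
  simp [Complex.star_def]

lemma rinner_add_left (X Y Z : Matrix (Fin p) (Fin q) ℂ) :
    rinner (X + Y) Z = rinner X Z + rinner Y Z := by
  unfold rinner
  simp [Matrix.conjTranspose_add, Matrix.add_mul]

lemma rinner_sub_left (X Y Z : Matrix (Fin p) (Fin q) ℂ) :
    rinner (X - Y) Z = rinner X Z - rinner Y Z := by
  unfold rinner
  simp [Matrix.conjTranspose_sub, Matrix.sub_mul]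

lemma rinner_smul_left (c : ℝ) (X Z : Matrix (Fin p) (Fin q) ℂ) :
    rinner (c • X) Z = c * rinner X Z := by
  unfold rinner
  rw [Matrix.conjTranspose_smul]
  simp [Matrix.smul_mul, Complex.real_smul]

lemma rinner_sum_left {ι : Type*} (s : Finset ι) (f : ι → Matrix (Fin p) (Fin q) ℂ)
    (Z : Matrix (Fin p) (Fin q) ℂ) :
    rinner (∑ i ∈ s, f i) Z = ∑ i ∈ s, rinner (f i) Z := by
  induction s using Finset.cons_induction with
  | empty => simp [rinner]
  | cons a s ha ih => simp [Finset.sum_cons, rinner_add_left, ih]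

lemma rinner_self_eq_zero {X : Matrix (Fin p) (Fin q) ℂ} (h : rinner X X = 0) : X = 0 := by
  have hs : rinner X X = ∑ k, ∑ i, Complex.normSq (X i k) := by
    unfold rinner
    rw [Matrix.trace]
    simp only [Matrix.diag_apply, Matrix.mul_apply, Matrix.conjTranspose_apply]
    rw [Complex.re_sum]
    congr 1; ext k
    rw [Complex.re_sum]
    congr 1; ext i
    simp [Complex.normSq_apply, Complex.mul_re]
  rw [hs] at h
  have : ∀ k ∈ Finset.univ, ∀ i ∈ Finset.univ, Complex.normSq (X i k) = 0 := by
    intro k _ i _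
    have h1 : ∀ k ∈ (Finset.univ : Finset (Fin q)), 0 ≤ ∑ i, Complex.normSq (X i k) :=
      fun k _ => Finset.sum_nonneg fun i _ => Complex.normSq_nonneg _
    have h2 := (Finset.sum_eq_zero_iff_of_nonneg h1).1 h k (Finset.mem_univ k)
    have h3 := (Finset.sum_eq_zero_iff_of_nonneg
      (fun i _ => Complex.normSq_nonneg (X i k))).1 h2 i (Finset.mem_univ i)
    exact h3
  ext i k
  simpa using Complex.normSq_eq_zero.mp (this k (Finset.mem_univ k) i (Finset.mem_univ i))
variable {r : ℕ}

lemma re_trace_skew_herm (S M : Matrix (Fin r) (Fin r) ℂ) (hS : Sᴴ = -S) (hM : Mᴴ = M) :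
    (Matrix.trace (Sᴴ * M)).re = 0 := by
  have h1 : (starRingEnd ℂ) (Matrix.trace (Sᴴ * M)) = Matrix.trace ((Sᴴ * M)ᴴ) := by
    rw [Matrix.trace_conjTranspose]; rfl
  have h2 : (Sᴴ * M)ᴴ = M * S := by
    rw [Matrix.conjTranspose_mul, Matrix.conjTranspose_conjTranspose, hM]
  have h3 : Matrix.trace (Sᴴ * M) = -Matrix.trace (M * S) := by
    rw [hS]; rw [Matrix.neg_mul, Matrix.trace_neg, Matrix.trace_mul_comm]
  have key : (starRingEnd ℂ) ((Sᴴ * M).trace) = -((Sᴴ * M).trace) := by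
    rw [h1, h2]
    rw [h3]; ring
  have hre := congrArg Complex.re key
  simp only [Complex.conj_re, Complex.neg_re] at hre
  linarith

lemma herm_of_re_trace_skew (M : Matrix (Fin r) (Fin r) ℂ)
    (h : ∀ K : Matrix (Fin r) (Fin r) ℂ, Kᴴ = -K → (Matrix.trace (Kᴴ * M)).re = 0) :
    Mᴴ = M := by
  set S : Matrix (Fin r) (Fin r) ℂ := M - Mᴴ with hSdef
  have hS : Sᴴ = -S := by
    simp [hSdef, Matrix.conjTranspose_sub, neg_sub]
  have h0 := h S hS
  have hdec : M = ((1/2 : ℂ)) • (M + Mᴴ) + ((1/2 : ℂ)) • S := by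
    module
  have hherm : (((1/2 : ℂ)) • (M + Mᴴ))ᴴ = ((1/2 : ℂ)) • (M + Mᴴ) := by
    rw [Matrix.conjTranspose_smul, Matrix.conjTranspose_add, Matrix.conjTranspose_conjTranspose]
    norm_num [add_comm]
  have hsplit : (Matrix.trace (Sᴴ * M)).re
      = (Matrix.trace (Sᴴ * (((1/2:ℂ)) • (M + Mᴴ)))).re + (Matrix.trace (Sᴴ * (((1/2:ℂ)) • S))).re := by
    conv_lhs => rw [hdec]
    rw [Matrix.mul_add, Matrix.trace_add, Complex.add_re]
  have hz1 : (Matrix.trace (Sᴴ * (((1/2:ℂ)) • (M + Mᴴ)))).re = 0 :=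
    re_trace_skew_herm S _ hS hherm
  have hz2 : (Matrix.trace (Sᴴ * (((1/2:ℂ)) • S))).re = (1/2 : ℝ) * (Matrix.trace (Sᴴ * S)).re := by
    rw [Matrix.mul_smul, Matrix.trace_smul]
    simp [Complex.smul_re]
  rw [hsplit, hz1, hz2] at h0
  have hSS : (Matrix.trace (Sᴴ * S)).re = 0 := by linarith
  have : S = 0 := by
    have : rinner S S = 0 := hSS
    exact rinner_self_eq_zero this
  have := sub_eq_zero.mp this
  exact this.symm

lemma mem_W_iff {n r : ℕ} (U₁ w : Matrix (Fin n) (Fin r) ℂ) :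
    (∀ K : Matrix (Fin r) (Fin r) ℂ, Kᴴ = -K → (Matrix.trace ((U₁ * K)ᴴ * w)).re = 0) ↔
    (U₁ᴴ * w)ᴴ = U₁ᴴ * w := by
  have key : ∀ K : Matrix (Fin r) (Fin r) ℂ, (U₁ * K)ᴴ * w = Kᴴ * (U₁ᴴ * w) := by
    intro K; rw [Matrix.conjTranspose_mul, Matrix.mul_assoc]
  constructor
  · intro h
    exact herm_of_re_trace_skew _ (fun K hK => by rw [← key]; exact h K hK)
  · intro h K hK; rw [key]; exact re_trace_skew_herm K _ hK h

lemma eq_zero_of_cross_zero {n r : ℕ} (U₁ w : Matrix (Fin n) (Fin r) ℂ)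
    (hU : U₁ᴴ * U₁ = 1) (hw : (U₁ᴴ * w)ᴴ = U₁ᴴ * w)
    (h : U₁ * wᴴ + w * U₁ᴴ = 0) : w = 0 := by
  have hw' : wᴴ * U₁ = U₁ᴴ * w := by
    have : (U₁ᴴ * w)ᴴ = wᴴ * U₁ := by
      rw [Matrix.conjTranspose_mul, Matrix.conjTranspose_conjTranspose]
    rw [← this, hw]
  have h1 : U₁ * (wᴴ * U₁) + w = 0 := by
    have := congrArg (fun M => M * U₁) h
    simp only [Matrix.add_mul, Matrix.zero_mul, Matrix.mul_assoc] at this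
    rw [hU, Matrix.mul_one] at this
    exact this
  rw [hw'] at h1
  have h2 : U₁ᴴ * (U₁ * (U₁ᴴ * w)) + U₁ᴴ * w = 0 := by
    have := congrArg (fun M => U₁ᴴ * M) h1
    simpa [Matrix.mul_add] using this
  rw [← Matrix.mul_assoc, hU, Matrix.one_mul] at h2
  have h3 : U₁ᴴ * w = 0 := by
    have h2' : (2:ℂ) • (U₁ᴴ * w) = 0 := by rw [two_smul]; exact h2
    simpa using (smul_eq_zero.mp h2').resolve_left (by norm_num)
  have h4 : U₁ * (U₁ᴴ * w) + w = 0 := h1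
  rw [h3, Matrix.mul_zero, zero_add] at h4
  exact h4

lemma rinner_cross {n r : ℕ} (U₁ w : Matrix (Fin n) (Fin r) ℂ) (B : Matrix (Fin n) (Fin n) ℂ)
    (hB : Bᴴ = B) : rinner (U₁ * wᴴ + w * U₁ᴴ) B = 2 * rinner (B * U₁) w := by
  rw [rinner_add_left]
  have t1 : rinner (U₁ * wᴴ) B = rinner (B * U₁) w := by
    unfold rinner
    congr 1
    rw [Matrix.conjTranspose_mul, Matrix.conjTranspose_conjTranspose,
      Matrix.conjTranspose_mul, hB]
    rw [Matrix.trace_mul_comm (U₁ᴴ * B) w, ← Matrix.mul_assoc]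
  have t2 : rinner (w * U₁ᴴ) B = rinner (B * U₁) w := by
    rw [rinner_comm (B * U₁) w]
    unfold rinner
    congr 1
    rw [Matrix.conjTranspose_mul, Matrix.conjTranspose_conjTranspose]
    rw [Matrix.trace_mul_cycle U₁ wᴴ B, ← Matrix.mul_assoc, Matrix.trace_mul_comm,
      Matrix.mul_assoc]
  rw [t1, t2]; ring

lemma cross_identity {n r : ℕ} (U₁ w : Matrix (Fin n) (Fin r) ℂ) :
    (U₁ + w) * (U₁ + w)ᴴ - (U₁ - w) * (U₁ - w)ᴴ
      = (U₁ * wᴴ + w * U₁ᴴ) + (U₁ * wᴴ + w * U₁ᴴ) := by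
  simp only [Matrix.conjTranspose_add, Matrix.conjTranspose_sub, Matrix.add_mul,
    Matrix.mul_add, Matrix.sub_mul, Matrix.mul_sub]
  abel

lemma exists_intermediate_submodule {E : Type*} [AddCommGroup E] [Module ℂ E]
    [FiniteDimensional ℂ E] (r : ℕ) (V : Submodule ℂ E)
    (h1 : Module.finrank ℂ V ≤ r) (h2 : r ≤ Module.finrank ℂ E) :
    ∃ S : Submodule ℂ E, V ≤ S ∧ Module.finrank ℂ S = r := by
  obtain ⟨d, hd⟩ := Nat.exists_eq_add_of_le h1
  induction d generalizing V with
  | zero => exact ⟨V, le_rfl, by omega⟩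
  | succ d ih =>
    have hlt : Module.finrank ℂ V < Module.finrank ℂ E := by omega
    have hne : V ≠ ⊤ := by
      intro h; rw [h, finrank_top] at hlt; omega
    obtain ⟨x, hx⟩ : ∃ x, x ∉ V := by
      by_contra h; push_neg at h
      exact hne (Submodule.eq_top_iff'.mpr h)
    have hx0 : x ≠ 0 := fun h => hx (h ▸ V.zero_mem)
    have hdisj : V ⊓ (ℂ ∙ x) = ⊥ :=
      (Submodule.disjoint_span_singleton' hx0).mpr hx |>.eq_bot
    have hfr : Module.finrank ℂ ↥(V ⊔ (ℂ ∙ x)) = Module.finrank ℂ V + 1 := by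
      have := Submodule.finrank_sup_add_finrank_inf_eq V (ℂ ∙ x)
      rw [hdisj, finrank_span_singleton hx0] at this
      simpa using this
    obtain ⟨S, hS1, hS2⟩ := ih (V ⊔ (ℂ ∙ x)) (by omega) (by omega)
    exact ⟨S, le_trans le_sup_left hS1, hS2⟩

lemma exists_isometry (n r : ℕ) (hrn : r ≤ n) (a : Matrix (Fin n) (Fin r) ℂ) :
    ∃ U₁ : Matrix (Fin n) (Fin r) ℂ, U₁ᴴ * U₁ = 1 ∧ U₁ * (U₁ᴴ * a) = a := by
  classical
  set cols : Fin r → EuclideanSpace ℂ (Fin n) := fun k => WithLp.toLp 2 (fun i => a i k) with hcols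
  set V : Submodule ℂ (EuclideanSpace ℂ (Fin n)) := Submodule.span ℂ (Set.range cols) with hV
  have hfV : Module.finrank ℂ V ≤ r := by
    have := finrank_span_le_card (R := ℂ) (Set.range cols)
    refine le_trans this ?_
    have : (Set.range cols).toFinset.card ≤ Fintype.card (Fin r) := by
      rw [Set.toFinset_range]
      exact le_trans (Finset.card_image_le) (by simp)
    simpa using this
  have hfE : r ≤ Module.finrank ℂ (EuclideanSpace ℂ (Fin n)) := by
    simp only [finrank_euclideanSpace, Fintype.card_fin]
    exact hrn
  obtain ⟨S, hVS, hSr⟩ := exists_intermediate_submodule r V hfV hfE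
  have b : OrthonormalBasis (Fin r) ℂ S :=
    (stdOrthonormalBasis ℂ S).reindex (finCongr (by rw [hSr]))
  set U₁ : Matrix (Fin n) (Fin r) ℂ := Matrix.of fun i k => ((b k : S) : EuclideanSpace ℂ (Fin n)) i with hU₁
  have hinner : ∀ (x y : EuclideanSpace ℂ (Fin n)), (inner ℂ x y : ℂ) = ∑ i, (starRingEnd ℂ) (x i) * y i := by
    intro x y
    simp [PiLp.inner_apply, RCLike.inner_apply, mul_comm]
  have hU : U₁ᴴ * U₁ = 1 := by
    ext k l
    have horth := orthonormal_iff_ite.mp b.orthonormal k l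
    rw [Submodule.coe_inner] at horth
    rw [hinner] at horth
    simp only [Matrix.mul_apply, Matrix.conjTranspose_apply, Matrix.one_apply, hU₁, Matrix.of_apply]
    simpa using horth
  refine ⟨U₁, hU, ?_⟩
  have h1 : ∀ u : EuclideanSpace ℂ (Fin n), ∀ i : Fin n,
      (inner ℂ (EuclideanSpace.single i (1:ℂ)) u : ℂ) = u i := by
    intro u i
    rw [hinner]
    simp [EuclideanSpace.single_apply, apply_ite, Finset.sum_ite_eq]
  have hexp : ∀ v : EuclideanSpace ℂ (Fin n), v ∈ S → ∀ i, ∑ k, ((b k : S) : EuclideanSpace ℂ (Fin n)) i * (inner ℂ ((b k : S) : EuclideanSpace ℂ (Fin n)) v : ℂ) = v i := by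
    intro v hv i
    have hrepr := b.sum_repr ⟨v, hv⟩
    calc ∑ k, ((b k : S) : EuclideanSpace ℂ (Fin n)) i * (inner ℂ ((b k : S) : EuclideanSpace ℂ (Fin n)) v : ℂ)
        = ∑ k, (inner ℂ (EuclideanSpace.single i (1:ℂ))
            ((b.repr ⟨v, hv⟩ k • b k : S) : EuclideanSpace ℂ (Fin n)) : ℂ) := by
          refine Finset.sum_congr rfl fun k _ => ?_
          rw [SetLike.val_smul, inner_smul_right, h1, OrthonormalBasis.repr_apply_apply,
            Submodule.coe_inner]
          ring
      _ = (inner ℂ (EuclideanSpace.single i (1:ℂ))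
            ((∑ k, b.repr ⟨v, hv⟩ k • b k : S) : EuclideanSpace ℂ (Fin n)) : ℂ) := by
          rw [Submodule.coe_sum, inner_sum]
      _ = v i := by rw [hrepr, h1]
  ext i j
  have hcol : cols j ∈ S := hVS (Submodule.subset_span (Set.mem_range_self j))
  have := hexp (cols j) hcol i
  simp only [hinner] at this
  simp only [Matrix.mul_apply, Matrix.conjTranspose_apply, hU₁, Matrix.of_apply]
  calc ∑ k, ((b k : S) : EuclideanSpace ℂ (Fin n)) i * ∑ l, (starRingEnd ℂ) (((b k : S) : EuclideanSpace ℂ (Fin n)) l) * a l j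
      = ∑ k, ((b k : S) : EuclideanSpace ℂ (Fin n)) i * ∑ l, (starRingEnd ℂ) (((b k : S) : EuclideanSpace ℂ (Fin n)) l) * cols j l := rfl
    _ = cols j i := this
    _ = a i j := rfl

noncomputable def matEquiv (n r : ℕ) :
    Matrix (Fin n) (Fin r) ℂ ≃ₗ[ℝ] EuclideanSpace ℂ (Fin n × Fin r) where
  toFun X := WithLp.toLp 2 (fun p : Fin n × Fin r => X p.1 p.2)
  invFun v := Matrix.of fun i k => v (i, k)
  map_add' X Y := rfl
  map_smul' c X := rfl
  left_inv X := rfl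
  right_inv v := rfl

lemma rinner_eq_sum {p q : ℕ} (X Y : Matrix (Fin p) (Fin q) ℂ) :
    rinner X Y = ∑ k, ∑ i, ((starRingEnd ℂ) (X i k) * Y i k).re := by
  unfold rinner
  rw [Matrix.trace]
  simp only [Matrix.diag_apply, Matrix.mul_apply, Matrix.conjTranspose_apply]
  rw [Complex.re_sum]
  congr 1; ext k
  rw [Complex.re_sum]
  rfl

lemma matEquiv_inner {n r : ℕ} (X Y : Matrix (Fin n) (Fin r) ℂ) :
    (inner ℝ (matEquiv n r X) (matEquiv n r Y) : ℝ) = rinner X Y := by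
  rw [rinner_eq_sum]
  rw [PiLp.inner_apply]
  rw [Fintype.sum_prod_type]
  rw [Finset.sum_comm]
  refine Finset.sum_congr rfl fun k _ => Finset.sum_congr rfl fun i _ => ?_
  simp [RCLike.inner_apply, mul_comm, matEquiv]
  rfl
lemma adjust_identity {n r : ℕ} (U₁ w₀ : Matrix (Fin n) (Fin r) ℂ)
    (C : Matrix (Fin r) (Fin r) ℂ) (hC : Cᴴ = -C) :
    U₁ * (w₀ - U₁ * C)ᴴ + (w₀ - U₁ * C) * U₁ᴴ = U₁ * w₀ᴴ + w₀ * U₁ᴴ := by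
  rw [Matrix.conjTranspose_sub, Matrix.conjTranspose_mul, hC]
  simp only [Matrix.mul_sub, Matrix.sub_mul, Matrix.neg_mul, Matrix.mul_neg,
    Matrix.mul_add, Matrix.add_mul, Matrix.mul_assoc, sub_neg_eq_add]
  abel


/-- a frame `{A_j}` of Hermitian matrices for `ℂ^{n×r}` is generalized
phase retrievable if and only if for every `U₁ ∈ ℂ^{n×r}` with orthonormal columns the
real span of `{A_j U₁}` equals the orthogonal complement (w.r.t.
`⟨z,w⟩_ℝ = Re tr(z* w)`) of `{U₁ K : K* = −K}`. -/
theorem phase_retrievable_iff_span (n r m : ℕ) (hr : 1 ≤ r) (hrn : r ≤ n)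
    (A : Fin m → Matrix (Fin n) (Fin n) ℂ) (hA : ∀ j, (A j).IsHermitian)
    (hframe : ∃ a b : ℝ, 0 < a ∧ a ≤ b ∧ ∀ z : Matrix (Fin n) (Fin r) ℂ,
      a * frob z ^ 2 ≤ ∑ j, |rinner (A j) (z * zᴴ)| ∧
      ∑ j, |rinner (A j) (z * zᴴ)| ≤ b * frob z ^ 2) :
    (∀ x y : Matrix (Fin n) (Fin r) ℂ,
        (∀ j, rinner (x * xᴴ) (A j) = rinner (y * yᴴ) (A j)) → x * xᴴ = y * yᴴ) ↔
    (∀ U₁ : Matrix (Fin n) (Fin r) ℂ, U₁ᴴ * U₁ = 1 →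
      (Submodule.span ℝ (Set.range fun j => A j * U₁) :
          Set (Matrix (Fin n) (Fin r) ℂ)) =
        {w : Matrix (Fin n) (Fin r) ℂ |
          ∀ K : Matrix (Fin r) (Fin r) ℂ, Kᴴ = -K →
            (Matrix.trace ((U₁ * K)ᴴ * w)).re = 0}) := by
  constructor
  · -- injectivity ⇒ span condition
    intro hinj U₁ hU
    have hsub : ∀ u, u ∈ Submodule.span ℝ (Set.range fun j => A j * U₁) →
        (U₁ᴴ * u)ᴴ = U₁ᴴ * u := by
      intro u hu
      induction hu using Submodule.span_induction with
      | mem z hz =>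
          obtain ⟨j, rfl⟩ := hz
          simp [Matrix.conjTranspose_mul, Matrix.mul_assoc, (hA j).eq]
      | zero => simp
      | add a b _ _ ha hb => rw [Matrix.mul_add, Matrix.conjTranspose_add, ha, hb]
      | smul c a _ ha =>
          rw [Matrix.mul_smul, Matrix.conjTranspose_smul, star_trivial, ha]
    ext w
    simp only [SetLike.mem_coe, Set.mem_setOf_eq]
    rw [mem_W_iff U₁ w]
    constructor
    · exact hsub w
    · intro hw
      set e := matEquiv n r with he
      set V : Submodule ℝ (Matrix (Fin n) (Fin r) ℂ) :=
        Submodule.span ℝ (Set.range fun j => A j * U₁) with hV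
      set Vm : Submodule ℝ (EuclideanSpace ℂ (Fin n × Fin r)) :=
        V.map e.toLinearMap with hVm
      haveI : FiniteDimensional ℝ (EuclideanSpace ℂ (Fin n × Fin r)) :=
        Module.Finite.trans ℂ _
      obtain ⟨v', hv', p', hp', hwvp⟩ := Vm.exists_add_mem_mem_orthogonal (e w)
      obtain ⟨v, hvV, hev⟩ := Submodule.mem_map.mp hv'
      simp only [LinearEquiv.coe_coe] at hev
      set p : Matrix (Fin n) (Fin r) ℂ := e.symm p' with hpdef
      have hep : e p = p' := e.apply_symm_apply p'
      have hwp : w = v + p := by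
        apply e.injective
        rw [map_add, hev, hep, hwvp]
      have hperp : ∀ j, rinner (A j * U₁) p = 0 := by
        intro j
        have hmem : e (A j * U₁) ∈ Vm :=
          Submodule.mem_map_of_mem (Submodule.subset_span (Set.mem_range_self j))
        have h0 := (Submodule.mem_orthogonal Vm p').mp hp' _ hmem
        rw [← matEquiv_inner (A j * U₁) p, ← he, hep]
        exact h0
      have hpW : (U₁ᴴ * p)ᴴ = U₁ᴴ * p := by
        have hvW : (U₁ᴴ * v)ᴴ = U₁ᴴ * v := hsub v hvV
        have hpwv : p = w - v := by rw [hwp]; abel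
        rw [hpwv, Matrix.mul_sub, Matrix.conjTranspose_sub, hw, hvW]
      have hmeas : ∀ j, rinner ((U₁ + p) * (U₁ + p)ᴴ) (A j)
          = rinner ((U₁ - p) * (U₁ - p)ᴴ) (A j) := by
        intro j
        have hdiff := rinner_sub_left ((U₁ + p) * (U₁ + p)ᴴ) ((U₁ - p) * (U₁ - p)ᴴ) (A j)
        rw [cross_identity U₁ p, rinner_add_left, rinner_cross U₁ p (A j) (hA j).eq,
          hperp j] at hdiff
        linarith [hdiff]
      have hxy := hinj _ _ hmeas
      have hzero : (U₁ * pᴴ + p * U₁ᴴ) + (U₁ * pᴴ + p * U₁ᴴ) = 0 := by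
        rw [← cross_identity U₁ p, hxy, sub_self]
      have hcz : U₁ * pᴴ + p * U₁ᴴ = 0 := by
        have h2 : (2:ℂ) • (U₁ * pᴴ + p * U₁ᴴ) = 0 := by rw [two_smul]; exact hzero
        simpa using (smul_eq_zero.mp h2).resolve_left (by norm_num)
      have hp0 : p = 0 := eq_zero_of_cross_zero U₁ p hU hpW hcz
      rw [hwp, hp0, add_zero]
      exact hvV
  · -- span condition ⇒ injectivity
    intro hspan x y hmeas
    set a : Matrix (Fin n) (Fin r) ℂ := x + y with ha
    set b : Matrix (Fin n) (Fin r) ℂ := x - y with hb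
    obtain ⟨U₁, hU, hP⟩ := exists_isometry n r hrn a
    have haP : aᴴ * (U₁ * U₁ᴴ) = aᴴ := by
      have h0 := congrArg Matrix.conjTranspose hP
      rw [Matrix.conjTranspose_mul, Matrix.conjTranspose_mul,
        Matrix.conjTranspose_conjTranspose] at h0
      rw [← Matrix.mul_assoc]
      exact h0
    set M : Matrix (Fin r) (Fin r) ℂ := U₁ᴴ * (b * (aᴴ * U₁)) with hM
    have hSskew : ((1/2 : ℝ) • (M - Mᴴ))ᴴ = -((1/2 : ℝ) • (M - Mᴴ)) := by
      rw [Matrix.conjTranspose_smul, star_trivial, Matrix.conjTranspose_sub,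
        Matrix.conjTranspose_conjTranspose, ← smul_neg, neg_sub]
    set w : Matrix (Fin n) (Fin r) ℂ :=
      b * (aᴴ * U₁) - U₁ * ((1/2 : ℝ) • (M - Mᴴ)) with hwdef
    have hUw : U₁ᴴ * w = (1/2 : ℝ) • (M + Mᴴ) := by
      rw [hwdef, Matrix.mul_sub, ← hM, ← Matrix.mul_assoc, hU, Matrix.one_mul]
      rw [smul_sub, smul_add]
      module
    have hherm : (U₁ᴴ * w)ᴴ = U₁ᴴ * w := by
      rw [hUw, Matrix.conjTranspose_smul, star_trivial, Matrix.conjTranspose_add,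
        Matrix.conjTranspose_conjTranspose, add_comm Mᴴ M]
    have hcross : U₁ * wᴴ + w * U₁ᴴ = (x * xᴴ - y * yᴴ) + (x * xᴴ - y * yᴴ) := by
      rw [hwdef, adjust_identity U₁ _ _ hSskew]
      have e1 : U₁ * (b * (aᴴ * U₁))ᴴ = a * bᴴ := by
        rw [Matrix.conjTranspose_mul, Matrix.conjTranspose_mul,
          Matrix.conjTranspose_conjTranspose, ← Matrix.mul_assoc]
        rw [← Matrix.mul_assoc U₁ U₁ᴴ a, Matrix.mul_assoc U₁ U₁ᴴ a, hP]
      have e2 : (b * (aᴴ * U₁)) * U₁ᴴ = b * aᴴ := by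
        rw [Matrix.mul_assoc, Matrix.mul_assoc, haP]
      rw [e1, e2, ha, hb]
      simp only [Matrix.conjTranspose_add, Matrix.conjTranspose_sub, Matrix.add_mul,
        Matrix.mul_add, Matrix.sub_mul, Matrix.mul_sub]
      abel
    have hwmem : w ∈ Submodule.span ℝ (Set.range fun j => A j * U₁) := by
      have hset := hspan U₁ hU
      have hmem : w ∈ {w : Matrix (Fin n) (Fin r) ℂ |
          ∀ K : Matrix (Fin r) (Fin r) ℂ, Kᴴ = -K →
            (Matrix.trace ((U₁ * K)ᴴ * w)).re = 0} := (mem_W_iff U₁ w).mpr hherm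
      rw [← hset] at hmem
      exact hmem
    obtain ⟨c, hc⟩ := (Submodule.mem_span_range_iff_exists_fun ℝ).mp hwmem
    have hperp : ∀ j, rinner (A j * U₁) w = 0 := by
      intro j
      have h1 := rinner_cross U₁ w (A j) (hA j).eq
      rw [hcross, rinner_add_left, rinner_sub_left, hmeas j, sub_self, add_zero] at h1
      linarith [h1]
    have hww : rinner w w = 0 := by
      nth_rewrite 1 [← hc]
      rw [rinner_sum_left]
      simp only [rinner_smul_left]
      simp [hperp]
    have hw0 : w = 0 := rinner_self_eq_zero hww
    have hz : (x * xᴴ - y * yᴴ) + (x * xᴴ - y * yᴴ) = 0 := by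
      rw [← hcross, hw0]
      simp
    have h2 : (2:ℂ) • (x * xᴴ - y * yᴴ) = 0 := by rw [two_smul]; exact hz
    have h3 := (smul_eq_zero.mp h2).resolve_left (by norm_num)
    exact sub_eq_zero.mp h3
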